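/- If (N, g, ∇, J) is a locally metallic Riemannian manifold (∇J = 0), then the warped product ℝ ×_f N with metric dt² + f²g and induced structure (φ, η = dt, ξ = ∂_t) satisfies (∇̃_X̃ φ)Ỹ = −(f'/f){⟨X̃, φỸ⟩ξ + η(Ỹ)φX̃}, i.e. it is a (−f'/f, φ)-Kenmotsu quadratic metric manifold. -/
import Mathlib


/-- If `(N, g, ∇, J)` is a locally metallic Riemannian manifold (`∇J = 0`),
then the warped product `ℝ ×_f N` with metric `dt² + f²g` and induced structure
`(φ, η = dt, ξ = ∂_t)` satisfies `(∇̃_X̃ φ)Ỹ = −(f'/f){⟨X̃, φỸ⟩ξ + η(Ỹ)φX̃}`,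
i.e. it is a `(−f'/f, φ)`-Kenmotsu quadratic metric manifold.
Vector fields on `ℝ ×_f N` are modeled as pairs `X̃ = (η(X̃), X)`, `A` being the ring
of smooth functions, `V` the `A`-module of `N`-components, `D` the derivation action on
functions; the Levi-Civita connection `∇̃` of the warped metric is given by the O'Neill
formulas: `∇̃_X̃ Ỹ = (X̃(η(Ỹ)) − f f' g(X,Y), (η(X̃) f'/f)Y + (η(Ỹ) f'/f)X + ∇^N_X Y)`. -/
theorem warped_product_is_Kenmotsu_quadratic
    {A V : Type*} [CommRing A] [AddCommGroup V] [Module A V]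
    (g : V →ₗ[A] V →ₗ[A] A)
    (hgsym : ∀ X Y, g X Y = g Y X)
    (J : V →ₗ[A] V) (p q : ℕ) (hp : 0 < p) (hq : 0 < q)
    (hJ : ∀ X, J (J X) = (p : A) • J X + (q : A) • X)
    (hJcompat : ∀ X Y, g (J X) Y = g X (J Y))
    (nablaN : V → V → V)
    (hlocallymetallic : ∀ X Y, nablaN X (J Y) = J (nablaN X Y))
    (f f' finv : A) (hfinv : f * finv = 1)
    (D : A × V → A → A) (hD0 : ∀ Z, D Z 0 = 0)
    (ξ : A × V) (hξ : ξ = (1, 0))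
    (η : A × V → A) (hη : ∀ Z, η Z = Z.1)
    (φ : A × V → A × V) (hφ : ∀ Z, φ Z = (0, J Z.2))
    (metric : A × V → A × V → A)
    (hmetric : ∀ Z W, metric Z W = Z.1 * W.1 + f ^ 2 * g Z.2 W.2)
    (nablaT : A × V → A × V → A × V)
    (hnablaT : ∀ Z W, nablaT Z W =
      (D Z W.1 - f * f' * g Z.2 W.2,
       (Z.1 * (f' * finv)) • W.2 + (W.1 * (f' * finv)) • Z.2 + nablaN Z.2 W.2)) :
    ∀ Z W, nablaT Z (φ W) - φ (nablaT Z W) =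
      (-(f' * finv)) • ((metric Z (φ W)) • ξ + (η W) • φ Z) := by
  intro Z W
  apply Prod.ext
  · simp only [hnablaT, hφ, hη, hξ, hmetric, hD0, Prod.smul_fst, Prod.fst_add, Prod.fst_sub,
      smul_eq_mul, Prod.mk.injEq]
    linear_combination (f * f' * g Z.2 (J W.2)) * hfinv
  · simp only [hnablaT, hφ, hη, hξ, hmetric, hD0, Prod.smul_snd, Prod.snd_add, Prod.snd_sub,
      hlocallymetallic, map_add, map_smul, smul_zero, zero_smul, add_zero, zero_add, smul_smul]
    module
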